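/- The global function f_L of the sand automaton L is not F-surjective: there exists a finite configuration (namely c with c_0 = 2 and c_i = 0 for i ≠ 0) that has no finite preimage under f_L. -/

import Mathlib

/-- The extended integers `ℤ ∪ {-∞, +∞}`. -/
abbrev EZ : Type := WithBot (WithTop ℤ)

/-- Embedding of `ℤ` into the extended integers. -/
def finVal (n : ℤ) : EZ := ((n : WithTop ℤ) : EZ)

/-- The integer value of a finite extended integer (`0` on `±∞`). -/
def valZ (x : EZ) : ℤ := WithBot.recBotCoe 0 (fun y => WithTop.recTopCoe 0 id y) x

/-- The measuring device `β_l^m`. -/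
noncomputable def beta (l : ℕ) (m : ℤ) (n : EZ) : EZ :=
  if finVal (m + (l : ℤ)) < n then ⊤
  else if n < finVal (m - (l : ℤ)) then ⊥
  else WithBot.map (WithTop.map (fun k => k - m)) n

/-- Reference height: the value of `x` if finite, `0` if `x = ±∞`. -/
def refH (x : EZ) : ℤ := if x = ⊥ ∨ x = ⊤ then 0 else valZ x

/-- One-dimensional sandpile configurations. -/
abbrev Config : Type := ℤ → EZ

/-- The neighborhood sequence `d_r^i(c)`: the `2r`-tuple of measured differences. -/
noncomputable def nbhd (r : ℕ) (c : Config) (i : ℤ) : Fin (2 * r) → EZ :=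
  fun j => beta r (refH (c i))
    (c (i + (if (j : ℕ) < r then ((j : ℕ) : ℤ) - (r : ℤ) else ((j : ℕ) : ℤ) - (r : ℤ) + 1)))

/-- The global function of the sand automaton of radius `r` with local rule `lam`. -/
noncomputable def globalF (r : ℕ) (lam : (Fin (2 * r) → EZ) → ℤ) (c : Config) : Config :=
  fun i => if c i = ⊥ ∨ c i = ⊤ then c i
    else finVal (valZ (c i) + lam (nbhd r c i))

/-- Finite configurations. -/
def FiniteConf (c : Config) : Prop := ∃ k : ℕ, ∀ i : ℤ, (k : ℤ) ≤ |i| → c i = finVal 0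

/-- Periodic configurations. -/
def PeriodicConf (c : Config) : Prop := ∃ p : ℤ, p ≠ 0 ∧ ∀ i : ℤ, c (i + p) = c i


/-- The local rule of the sand automaton `L`:
`λ_L(x,y) = -1` if `x < 0`, `+1` if `x > 0`, `0` otherwise. -/
noncomputable def lamL (v : Fin 2 → EZ) : ℤ :=
  if v 0 < finVal 0 then -1
  else if finVal 0 < v 0 then 1
  else 0

/-- The finite configuration with a single column of height `2` at position `0`. -/
def cTwo : Config := fun i => if i = 0 then finVal 2 else finVal 0

lemma valZ_finVal (n : ℤ) : valZ (finVal n) = n := rfl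
lemma finVal_ne_bot (n : ℤ) : finVal n ≠ ⊥ := by simp [finVal]
lemma finVal_ne_top (n : ℤ) : finVal n ≠ ⊤ := by simp [finVal]
lemma finVal_lt_iff {m n : ℤ} : finVal m < finVal n ↔ m < n := by simp [finVal]
lemma finVal_inj {m n : ℤ} : finVal m = finVal n ↔ m = n := by simp [finVal]
lemma refH_finVal (n : ℤ) : refH (finVal n) = n := by
  simp [refH, finVal_ne_bot n, finVal_ne_top n, valZ_finVal]
lemma beta_finVal (a b : ℤ) : beta 1 a (finVal b) =
    if a + 1 < b then ⊤ else if b < a - 1 then ⊥ else finVal (b - a) := by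
  rw [beta, show ((1:ℕ):ℤ) = 1 from rfl]
  rw [show (WithBot.map (WithTop.map (fun k => k - a)) (finVal b)) = finVal (b - a) from rfl]
  simp only [finVal_lt_iff]

lemma nbhd_zero (c : Config) (i : ℤ) : nbhd 1 c i 0 = beta 1 (refH (c i)) (c (i - 1)) := by
  rw [nbhd]
  norm_num
  ring_nf

lemma bot_lt_finVal (n : ℤ) : (⊥ : EZ) < finVal n := by simp [finVal]
lemma finVal_lt_top (n : ℤ) : finVal n < (⊤ : EZ) :=
  lt_top_iff_ne_top.2 (finVal_ne_top n)

lemma lamL_eval (c : Config) (i : ℤ) (a b : ℤ) (hi : c i = finVal a) (hl : c (i-1) = finVal b) :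
    lamL (nbhd 1 c i) = if b < a then -1 else if a < b then 1 else 0 := by
  rw [lamL, show (nbhd 1 c i) 0 = nbhd 1 c i 0 from rfl, nbhd_zero, hi, hl, refH_finVal,
    beta_finVal]
  have hb := bot_lt_finVal 0
  have ht := finVal_lt_top 0
  split_ifs <;> simp_all [finVal_lt_iff] <;> omega

lemma globalF_eval (c : Config) (i : ℤ) (a b : ℤ) (hi : c i = finVal a) (hl : c (i-1) = finVal b) :
    globalF 1 lamL c i = finVal (a + (if b < a then -1 else if a < b then 1 else 0)) := by
  rw [globalF]
  rw [if_neg (by rw [hi]; push_neg; exact ⟨finVal_ne_bot a, finVal_ne_top a⟩)]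
  rw [lamL_eval c i a b hi hl, hi, valZ_finVal]

/-- `f_L` is not `F`-surjective: the finite configuration `cTwo` (with `c_0 = 2` and
`c_i = 0` for `i ≠ 0`) has no finite preimage under `f_L`. -/
theorem L_not_F_surjective :
    FiniteConf cTwo ∧
    (∀ c' : Config, FiniteConf c' → globalF 1 lamL c' ≠ cTwo) ∧
    ¬ (∀ c : Config, FiniteConf c → ∃ c', FiniteConf c' ∧ globalF 1 lamL c' = c) := by
  have part1 : FiniteConf cTwo := by
    refine ⟨1, fun i hi => ?_⟩
    rw [cTwo, if_neg (by intro h; rw [h] at hi; simp at hi)]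
  have part2 : ∀ c' : Config, FiniteConf c' → globalF 1 lamL c' ≠ cTwo := by
    rintro c' ⟨k, hk⟩ heq
    have hA : ∀ i : ℤ, c' i = finVal (valZ (c' i)) := by
      intro i
      have hgi : globalF 1 lamL c' i = cTwo i := congrFun heq i
      have hct : ∃ m : ℤ, cTwo i = finVal m := by
        by_cases h : i = 0
        · exact ⟨2, by simp [cTwo, h]⟩
        · exact ⟨0, by simp [cTwo, h]⟩
      obtain ⟨m, hm⟩ := hct
      rcases hci : c' i with _ | x
      · exfalso
        have hb : c' i = (⊥ : EZ) := hci
        rw [globalF, if_pos (Or.inl hb), hb, hm] at hgi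
        exact finVal_ne_bot m hgi.symm
      · rcases x with _ | n
        · exfalso
          have hcitop : c' i = (⊤ : EZ) := hci
          rw [globalF, if_pos (Or.inr hcitop), hcitop, hm] at hgi
          exact finVal_ne_top m hgi.symm
        · exact rfl
    have eqn : ∀ i : ℤ, valZ (c' i) +
        (if valZ (c' (i-1)) < valZ (c' i) then -1
         else if valZ (c' i) < valZ (c' (i-1)) then 1 else 0) = (if i = 0 then 2 else 0) := by
      intro i
      have h := congrFun heq i
      rw [globalF_eval c' i (valZ (c' i)) (valZ (c' (i-1))) (hA i) (hA (i-1)), cTwo] at h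
      split_ifs at h ⊢ <;> exact finVal_inj.1 h
    have small : ∀ i : ℤ, i ≠ 0 → -1 ≤ valZ (c' i) ∧ valZ (c' i) ≤ 1 := by
      intro i h
      have e := eqn i
      rw [if_neg h] at e
      split_ifs at e <;> omega
    have lemA : ∀ i : ℤ, i ≠ 0 → 1 ≤ valZ (c' (i-1)) → valZ (c' i) = -1 := by
      intro i h h1
      have e := eqn i
      rw [if_neg h] at e
      split_ifs at e <;> omega
    have lemB : ∀ i : ℤ, i ≠ 0 → valZ (c' (i-1)) = -1 → valZ (c' i) = 1 := by
      intro i h h1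
      have e := eqn i
      rw [if_neg h] at e
      split_ifs at e <;> omega
    have h0 : valZ (c' 0) = 3 := by
      have e := eqn 0
      rw [if_pos rfl, show (0:ℤ) - 1 = -1 by norm_num] at e
      have hs := small (-1) (by norm_num)
      split_ifs at e <;> omega
    have h1' : valZ (c' 1) = -1 := by
      apply lemA 1 one_ne_zero
      rw [show (1:ℤ) - 1 = 0 by norm_num, h0]; norm_num
    have alt : ∀ n : ℕ, valZ (c' (1 + 2*n)) = -1 := by
      intro n
      induction n with
      | zero => simpa using h1'
      | succ m ih =>
        have hmid : valZ (c' (2 + 2*(m:ℤ))) = 1 := by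
          apply lemB (2+2*(m:ℤ)) (by omega)
          rw [show (2+2*(m:ℤ))-1 = 1+2*m by ring]; exact ih
        have hstep : valZ (c' (3 + 2*(m:ℤ))) = -1 := by
          apply lemA (3+2*(m:ℤ)) (by omega)
          rw [show (3+2*(m:ℤ))-1 = 2+2*m by ring, hmid]
        rw [show (1:ℤ) + 2*((m+1 : ℕ):ℤ) = 3 + 2*m by push_cast; ring]
        exact hstep
    have hz : valZ (c' (1 + 2*(k:ℤ))) = 0 := by
      have h := hk (1 + 2*(k:ℤ)) (by rw [abs_of_nonneg (by positivity)]; omega)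
      rw [h]; rfl
    have := alt k
    omega
  exact ⟨part1, part2, fun hsurj => by
    obtain ⟨c', hc', heqc⟩ := hsurj cTwo part1
    exact part2 c' hc' heqc⟩
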